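/- Let X_1,…,X_m be smooth vector fields on an open set Ω ⊂ ℝⁿ satisfying [X_i,[X_i,X_j]] = 0 for all i,j = 1,…,m. Then for every u ∈ C³(Ω) and every j = 1,…,m, Σ_{i=1}^m X_i ( 𝓕_2^{ij}(X²u) ) = 0; explicitly, Σ_{i=1}^m X_i ( (Δ_X u) δ_{ij} + X_iX_ju − 2 X_jX_iu ) = 0, i.e. the columns of the matrix [𝓕_2^{ij}(X²u)] are divergence free with respect to X. -/

import Mathlib

open MeasureTheory Filter Topology

noncomputable section

/-- Action of a first-order vector field with coefficient vector `c` on a function `u`: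
`(Xu)(x) = ∑ j c(x)_j D_j u(x) = Du(x)·c(x)`. -/
def Xop {n : ℕ} (c : (Fin n → ℝ) → (Fin n → ℝ)) (u : (Fin n → ℝ) → ℝ)
    (x : Fin n → ℝ) : ℝ :=
  fderiv ℝ u x (c x)

/-- Lie bracket of the coefficient vector fields `c`, `d`. -/
def vfBracket {n : ℕ} (c d : (Fin n → ℝ) → (Fin n → ℝ)) (x : Fin n → ℝ) :
    Fin n → ℝ :=
  fun l => fderiv ℝ (fun y => d y l) x (c x) - fderiv ℝ (fun y => c y l) x (d x)

/-- The sub-Laplacian `Δ_X u = ∑ i X_i X_i u`. -/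
def subLap {n m : ℕ} (b : Fin m → (Fin n → ℝ) → (Fin n → ℝ))
    (u : (Fin n → ℝ) → ℝ) (x : Fin n → ℝ) : ℝ :=
  ∑ i, Xop (b i) (Xop (b i) u) x

/-- The commutator `[X_i, X_j] u = X_i X_j u - X_j X_i u`. -/
def commOp {n m : ℕ} (b : Fin m → (Fin n → ℝ) → (Fin n → ℝ)) (i j : Fin m)
    (u : (Fin n → ℝ) → ℝ) (x : Fin n → ℝ) : ℝ :=
  Xop (b i) (Xop (b j) u) x - Xop (b j) (Xop (b i) u) x

/-- The symmetric Hessian `X_s² u = [½ (X_i X_j + X_j X_i) u]`. -/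
def symmHess {n m : ℕ} (b : Fin m → (Fin n → ℝ) → (Fin n → ℝ))
    (u : (Fin n → ℝ) → ℝ) (x : Fin n → ℝ) : Matrix (Fin m) (Fin m) ℝ :=
  fun i j => (Xop (b i) (Xop (b j) u) x + Xop (b j) (Xop (b i) u) x) / 2

theorem symmHess_isHermitian {n m : ℕ} (b : Fin m → (Fin n → ℝ) → (Fin n → ℝ))
    (u : (Fin n → ℝ) → ℝ) (x : Fin n → ℝ) : (symmHess b u x).IsHermitian := by
  unfold Matrix.IsHermitian
  ext i j
  simp only [Matrix.conjTranspose_apply, symmHess, star_trivial]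
  ring

/-- Eigenvalues of the symmetric Hessian. -/
def hessEig {n m : ℕ} (b : Fin m → (Fin n → ℝ) → (Fin n → ℝ))
    (u : (Fin n → ℝ) → ℝ) (x : Fin n → ℝ) : Fin m → ℝ :=
  (symmHess_isHermitian b u x).eigenvalues

/-- `k`-th elementary symmetric function of `m` real numbers. -/
def esymmF {m : ℕ} (k : ℕ) (lam : Fin m → ℝ) : ℝ :=
  ∑ s ∈ Finset.powersetCard k (Finset.univ : Finset (Fin m)), ∏ i ∈ s, lam i

/-- `S_{j,i}(λ)`: the `j`-th elementary symmetric function with the variable `λ_i` set to `0`. -/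
def esymmDrop {m : ℕ} (j : ℕ) (i : Fin m) (lam : Fin m → ℝ) : ℝ :=
  ∑ s ∈ Finset.powersetCard j ((Finset.univ : Finset (Fin m)).erase i), ∏ l ∈ s, lam l

/-- `u` is `k`-convex with respect to the vector fields `b` on `Ω`:
`S_j(λ(X_s²u)) ≥ 0` on `Ω` for `j = 1, …, k`. -/
def IsKConvex {n m : ℕ} (Ω : Set (Fin n → ℝ)) (b : Fin m → (Fin n → ℝ) → (Fin n → ℝ))
    (k : ℕ) (u : (Fin n → ℝ) → ℝ) : Prop :=
  ∀ x ∈ Ω, ∀ j, 1 ≤ j → j ≤ k → 0 ≤ esymmF j (hessEig b u x)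

/-- `F_2[u] = S_2(λ(X_s²u))`. -/
def F2fun {n m : ℕ} (b : Fin m → (Fin n → ℝ) → (Fin n → ℝ))
    (u : (Fin n → ℝ) → ℝ) (x : Fin n → ℝ) : ℝ :=
  esymmF 2 (hessEig b u x)

/-- `𝓔_2[u] = ∑_{i<j} ([X_i,X_j]u)²`. -/
def E2fun {n m : ℕ} (b : Fin m → (Fin n → ℝ) → (Fin n → ℝ))
    (u : (Fin n → ℝ) → ℝ) (x : Fin n → ℝ) : ℝ :=
  ∑ i : Fin m, ∑ j ∈ Finset.Ioi i, (commOp b i j u x) ^ 2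

/-- `𝓕_2[u] = F_2[u] + (3/4) 𝓔_2[u]`. -/
def calF2 {n m : ℕ} (b : Fin m → (Fin n → ℝ) → (Fin n → ℝ))
    (u : (Fin n → ℝ) → ℝ) (x : Fin n → ℝ) : ℝ :=
  F2fun b u x + (3 / 4) * E2fun b u x

/-- `|Xu|(x)`, the length of the subelliptic gradient. -/
def XgradNorm {n m : ℕ} (b : Fin m → (Fin n → ℝ) → (Fin n → ℝ))
    (u : (Fin n → ℝ) → ℝ) (x : Fin n → ℝ) : ℝ :=
  Real.sqrt (∑ i, (Xop (b i) u x) ^ 2)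

/-- Condition (i): each `X_i` is divergence free, i.e. anti-self-adjoint. -/
def DivFree {n m : ℕ} (Ω : Set (Fin n → ℝ))
    (b : Fin m → (Fin n → ℝ) → (Fin n → ℝ)) : Prop :=
  ∀ i : Fin m, ∀ x ∈ Ω, ∑ j, fderiv ℝ (fun y => b i y j) x (Pi.single j 1) = 0

/-- The set of iterated Lie brackets generated by the fields `b`. -/
inductive LieGen {n m : ℕ} (b : Fin m → (Fin n → ℝ) → (Fin n → ℝ)) :
    ((Fin n → ℝ) → (Fin n → ℝ)) → Prop
  | base (i : Fin m) : LieGen b (b i)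
  | bracket {c d : (Fin n → ℝ) → (Fin n → ℝ)} :
      LieGen b c → LieGen b d → LieGen b (fun x => vfBracket c d x)

/-- Condition (ii): the Hörmander condition; iterated commutators span `ℝⁿ` at each point. -/
def Hormander {n m : ℕ} (Ω : Set (Fin n → ℝ))
    (b : Fin m → (Fin n → ℝ) → (Fin n → ℝ)) : Prop :=
  ∀ x ∈ Ω, Submodule.span ℝ {v : Fin n → ℝ | ∃ c, LieGen b c ∧ c x = v} = ⊤

/-- Condition (iii): all second commutators `[X_i,[X_i,X_j]]` vanish. -/
def SecondCommVanish {n m : ℕ} (Ω : Set (Fin n → ℝ))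
    (b : Fin m → (Fin n → ℝ) → (Fin n → ℝ)) : Prop :=
  ∀ i j : Fin m, ∀ x ∈ Ω, vfBracket (b i) (fun y => vfBracket (b i) (b j) y) x = 0

/-- `Ω' ⊂⊂ Ω`: `Ω'` is open and compactly contained in `Ω`. -/
def CptIn {n : ℕ} (Ω' Ω : Set (Fin n → ℝ)) : Prop :=
  IsOpen Ω' ∧ IsCompact (closure Ω') ∧ closure Ω' ⊆ Ω

/-- A sub-unitary (piecewise C¹) curve on `[0,T]` with respect to the fields `b`. -/
def IsSubunitary {n m : ℕ} (b : Fin m → (Fin n → ℝ) → (Fin n → ℝ)) (T : ℝ)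
    (γ : ℝ → Fin n → ℝ) : Prop :=
  ContinuousOn γ (Set.Icc 0 T) ∧
  ∃ S : Finset ℝ, ∀ t ∈ Set.Ioo 0 T, t ∉ S →
    ∃ γ' : Fin n → ℝ, HasDerivAt γ γ' t ∧
      ∀ ξ : Fin n → ℝ, (∑ j, γ' j * ξ j) ^ 2 ≤ ∑ i, (∑ j, b i (γ t) j * ξ j) ^ 2

/-- The Carnot–Carathéodory distance associated with the fields `b`. -/
def ccDist {n m : ℕ} (b : Fin m → (Fin n → ℝ) → (Fin n → ℝ))
    (x y : Fin n → ℝ) : ℝ :=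
  sInf {T : ℝ | 0 < T ∧ ∃ γ : ℝ → Fin n → ℝ,
    IsSubunitary b T γ ∧ γ 0 = x ∧ γ T = y}

/-- The C-C ball of radius `R` about `x`. -/
def ccBall {n m : ℕ} (b : Fin m → (Fin n → ℝ) → (Fin n → ℝ))
    (x : Fin n → ℝ) (R : ℝ) : Set (Fin n → ℝ) :=
  {y | ccDist b x y < R}

/-- The doubling property `|B_{tR}(x)| ≥ C t^Q |B_R(x)|`. -/
def DoublingDim {n m : ℕ} (Ω : Set (Fin n → ℝ))
    (b : Fin m → (Fin n → ℝ) → (Fin n → ℝ)) (Q : ℕ) : Prop :=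
  ∃ C > (0 : ℝ), ∃ R0 > (0 : ℝ), ∀ x ∈ Ω, ∀ t ∈ Set.Ioo (0 : ℝ) 1,
    ∀ R : ℝ, 0 < R → R < R0 →
      C * t ^ Q * (volume (ccBall b x R)).toReal ≤ (volume (ccBall b x (t * R))).toReal

/-- `Q` is the homogeneous dimension of the system `b` in `Ω`. -/
def IsHomDim {n m : ℕ} (Ω : Set (Fin n → ℝ))
    (b : Fin m → (Fin n → ℝ) → (Fin n → ℝ)) (Q : ℕ) : Prop :=
  0 < Q ∧ DoublingDim Ω b Q ∧ ∀ Q' : ℕ, 0 < Q' → DoublingDim Ω b Q' → Q ≤ Q'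

/-- The class `φ^k(Ω)` of `L¹_loc(Ω)` limits of smooth `k`-convex functions. -/
def PhiK {n m : ℕ} (Ω : Set (Fin n → ℝ)) (b : Fin m → (Fin n → ℝ) → (Fin n → ℝ))
    (k : ℕ) (u : (Fin n → ℝ) → ℝ) : Prop :=
  LocallyIntegrableOn u Ω ∧
  ∀ Ω' : Set (Fin n → ℝ), CptIn Ω' Ω →
    ∃ us : ℕ → (Fin n → ℝ) → ℝ,
      (∀ l, ContDiffOn ℝ 2 (us l) Ω' ∧ IsKConvex Ω' b k (us l)) ∧
      ∀ K : Set (Fin n → ℝ), K ⊆ Ω' → IsCompact K →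
        Tendsto (fun l => ∫ x in K, |us l x - u x|) atTop (𝓝 0)

end


section Helpers
variable {n : ℕ}

lemma fderiv_coord {d : (Fin n → ℝ) → (Fin n → ℝ)} {x : Fin n → ℝ}
    (hd : DifferentiableAt ℝ d x) (l : Fin n) (v : Fin n → ℝ) :
    fderiv ℝ (fun y => d y l) x v = fderiv ℝ d x v l := by
  have h2 : HasFDerivAt (fun y => d y l)
      ((ContinuousLinearMap.proj l).comp (fderiv ℝ d x)) x :=
    (hasFDerivAt_pi'.mp hd.hasFDerivAt) l
  rw [h2.fderiv]; rfl

lemma Xop_contDiffAt {d : (Fin n → ℝ) → (Fin n → ℝ)} {u : (Fin n → ℝ) → ℝ}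
    {x : Fin n → ℝ} {k l : WithTop ℕ∞} (hd : ContDiffAt ℝ k d x)
    (hu : ContDiffAt ℝ l u x) (hkl : k + 1 ≤ l) :
    ContDiffAt ℝ k (Xop d u) x :=
  (hu.fderiv_right hkl).clm_apply hd

lemma Xop_bracket {c d : (Fin n → ℝ) → (Fin n → ℝ)} {u : (Fin n → ℝ) → ℝ}
    {x : Fin n → ℝ} (hc : DifferentiableAt ℝ c x) (hd : DifferentiableAt ℝ d x)
    (hu : ContDiffAt ℝ 2 u x) :
    Xop c (Xop d u) x - Xop d (Xop c u) x = Xop (vfBracket c d) u x := by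
  have hf' : ContDiffAt ℝ 1 (fderiv ℝ u) x := hu.fderiv_right (by norm_num)
  have hf'd : DifferentiableAt ℝ (fderiv ℝ u) x := hf'.differentiableAt one_ne_zero
  have hev : ∀ᶠ y in 𝓝 x, HasFDerivAt u (fderiv ℝ u y) y := by
    filter_upwards [hu.eventually (by norm_num)] with y hy
    exact (hy.differentiableAt two_ne_zero).hasFDerivAt
  have hsym := second_derivative_symmetric_of_eventually hev hf'd.hasFDerivAt
  have h1 : Xop c (Xop d u) x
      = fderiv ℝ (fderiv ℝ u) x (c x) (d x) + fderiv ℝ u x (fderiv ℝ d x (c x)) := by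
    show fderiv ℝ (fun y => (fderiv ℝ u y) (d y)) x (c x) = _
    rw [fderiv_clm_apply hf'd hd]
    simp [ContinuousLinearMap.flip_apply]
    ring
  have h2 : Xop d (Xop c u) x
      = fderiv ℝ (fderiv ℝ u) x (d x) (c x) + fderiv ℝ u x (fderiv ℝ c x (d x)) := by
    show fderiv ℝ (fun y => (fderiv ℝ u y) (c y)) x (d x) = _
    rw [fderiv_clm_apply hf'd hc]
    simp [ContinuousLinearMap.flip_apply]
    ring
  have h3 : vfBracket c d x = fderiv ℝ d x (c x) - fderiv ℝ c x (d x) := by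
    funext l
    simp [vfBracket, fderiv_coord hd, fderiv_coord hc]
  show _ = fderiv ℝ u x (vfBracket c d x)
  rw [h1, h2, hsym (c x) (d x), h3, map_sub]
  ring

lemma Xop_congr {c : (Fin n → ℝ) → (Fin n → ℝ)} {f g : (Fin n → ℝ) → ℝ}
    {x : Fin n → ℝ} (h : f =ᶠ[𝓝 x] g) : Xop c f x = Xop c g x := by
  unfold Xop; rw [h.fderiv_eq]

lemma Xop_sub {c : (Fin n → ℝ) → (Fin n → ℝ)} {f g : (Fin n → ℝ) → ℝ}
    {x : Fin n → ℝ} (hf : DifferentiableAt ℝ f x) (hg : DifferentiableAt ℝ g x) :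
    Xop c (fun y => f y - g y) x = Xop c f x - Xop c g x := by
  unfold Xop; rw [fderiv_fun_sub hf hg]; simp

lemma Xop_sub_two {c : (Fin n → ℝ) → (Fin n → ℝ)} {f g : (Fin n → ℝ) → ℝ}
    {x : Fin n → ℝ} (hf : DifferentiableAt ℝ f x) (hg : DifferentiableAt ℝ g x) :
    Xop c (fun y => f y - 2 * g y) x = Xop c f x - 2 * Xop c g x := by
  unfold Xop
  rw [fderiv_fun_sub hf (hg.const_mul 2), fderiv_const_mul hg 2]
  simp

lemma Xop_comb {c : (Fin n → ℝ) → (Fin n → ℝ)} {f g h : (Fin n → ℝ) → ℝ}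
    {x : Fin n → ℝ} (hf : DifferentiableAt ℝ f x) (hg : DifferentiableAt ℝ g x)
    (hh : DifferentiableAt ℝ h x) :
    Xop c (fun y => f y + g y - 2 * h y) x
      = Xop c f x + Xop c g x - 2 * Xop c h x := by
  unfold Xop
  rw [fderiv_fun_sub (f := fun y => f y + g y) (hf.add hg) (hh.const_mul 2), fderiv_fun_add hf hg, fderiv_const_mul hh 2]
  simp

end Helpers

/-- identity (2.5). If all second commutators `[X_i,[X_i,X_j]]`
vanish, the columns of `[𝓕₂^{ij}(X²u)]` are divergence free with respect to `X`:
`∑_i X_i((Δ_X u)δ_{ij} + X_iX_ju - 2X_jX_iu) = 0`. -/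
theorem divergence_identity (n m : ℕ) (Ω : Set (Fin n → ℝ)) (hΩo : IsOpen Ω)
    (b : Fin m → (Fin n → ℝ) → (Fin n → ℝ))
    (hb : ∀ i, ContDiffOn ℝ (⊤ : ℕ∞) (b i) Ω)
    (hcomm : ∀ i j : Fin m, ∀ x ∈ Ω,
      vfBracket (b i) (fun y => vfBracket (b i) (b j) y) x = 0)
    (u : (Fin n → ℝ) → ℝ) (hu : ContDiffOn ℝ 3 u Ω) (j : Fin m) :
    ∀ x ∈ Ω,
      ∑ i : Fin m, Xop (b i)
        (fun y => (if i = j then subLap b u y else 0) +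
          Xop (b i) (Xop (b j) u) y - 2 * Xop (b j) (Xop (b i) u) y) x = 0 := by
  intro x hx
  have hΩx : Ω ∈ 𝓝 x := hΩo.mem_nhds hx
  have hbAt : ∀ (i : Fin m), ∀ y ∈ Ω, ∀ k : ℕ, ContDiffAt ℝ k (b i) y :=
    fun i y hy k => ((hb i).contDiffAt (hΩo.mem_nhds hy)).of_le
      (WithTop.coe_le_coe.mpr le_top)
  have huAt : ∀ y ∈ Ω, ContDiffAt ℝ 3 u y := fun y hy => hu.contDiffAt (hΩo.mem_nhds hy)
  have hX1 : ∀ (q : Fin m), ∀ y ∈ Ω, ContDiffAt ℝ 2 (Xop (b q) u) y := fun q y hy =>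
    Xop_contDiffAt (hbAt q y hy 2) (huAt y hy) (by norm_num)
  have hX2 : ∀ (p q : Fin m), ∀ y ∈ Ω, ContDiffAt ℝ 1 (Xop (b p) (Xop (b q) u)) y :=
    fun p q y hy => Xop_contDiffAt (hbAt p y hy 1) (hX1 q y hy) (by norm_num)
  have hdSub : DifferentiableAt ℝ (subLap b u) x := by
    have : DifferentiableAt ℝ (fun y => ∑ k : Fin m, Xop (b k) (Xop (b k) u) y) x :=
      DifferentiableAt.fun_sum fun k _ => (hX2 k k x hx).differentiableAt one_ne_zero
    exact this
  have hXsum : Xop (b j) (subLap b u) x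
      = ∑ k : Fin m, Xop (b j) (Xop (b k) (Xop (b k) u)) x := by
    show fderiv ℝ (fun y => ∑ k : Fin m, Xop (b k) (Xop (b k) u) y) x (b j x) = _
    rw [fderiv_fun_sum (fun k _ => (hX2 k k x hx).differentiableAt one_ne_zero)]
    simp [Xop]
  have key : ∀ i : Fin m,
      Xop (b j) (Xop (b i) (Xop (b i) u)) x
        + Xop (b i) (Xop (b i) (Xop (b j) u)) x
        - 2 * Xop (b i) (Xop (b j) (Xop (b i) u)) x = 0 := by
    intro i
    set E : (Fin n → ℝ) → Fin n → ℝ := fun y => vfBracket (b i) (b j) y with hE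
    have hbid : DifferentiableAt ℝ (b i) x := (hbAt i x hx 1).differentiableAt (by norm_num)
    have hbjd : DifferentiableAt ℝ (b j) x := (hbAt j x hx 1).differentiableAt (by norm_num)
    have hEd : DifferentiableAt ℝ E x := by
      have h1 : ContDiffAt ℝ 1 (fderiv ℝ (b j)) x := (hbAt j x hx 2).fderiv_right (by norm_num)
      have h2 : ContDiffAt ℝ 1 (fderiv ℝ (b i)) x := (hbAt i x hx 2).fderiv_right (by norm_num)
      have hsm : DifferentiableAt ℝ
          (fun y => fderiv ℝ (b j) y (b i y) - fderiv ℝ (b i) y (b j y)) x :=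
        ((h1.clm_apply (hbAt i x hx 1)).sub
          (h2.clm_apply (hbAt j x hx 1))).differentiableAt (by norm_num)
      have heq : (fun y => fderiv ℝ (b j) y (b i y) - fderiv ℝ (b i) y (b j y)) =ᶠ[𝓝 x] E := by
        filter_upwards [hΩx] with y hy
        funext l
        have hdjy : DifferentiableAt ℝ (b j) y := (hbAt j y hy 1).differentiableAt (by norm_num)
        have hdiy : DifferentiableAt ℝ (b i) y := (hbAt i y hy 1).differentiableAt (by norm_num)
        simp only [Pi.sub_apply, hE, vfBracket]
        rw [fderiv_coord hdjy l, fderiv_coord hdiy l]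
      exact heq.differentiableAt_iff.mp hsm
    have hbrA : ∀ y ∈ Ω,
        Xop (b i) (Xop (b j) u) y - Xop (b j) (Xop (b i) u) y = Xop E u y := by
      intro y hy
      exact Xop_bracket ((hbAt i y hy 1).differentiableAt (by norm_num))
        ((hbAt j y hy 1).differentiableAt (by norm_num)) ((huAt y hy).of_le (by norm_num))
    have hdA : DifferentiableAt ℝ (Xop (b i) (Xop (b j) u)) x :=
      (hX2 i j x hx).differentiableAt (by norm_num)
    have hdB : DifferentiableAt ℝ (Xop (b j) (Xop (b i) u)) x :=
      (hX2 j i x hx).differentiableAt (by norm_num)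
    have hsplit := Xop_sub (c := b i) hdA hdB
    have hsub : Xop (b i)
        (fun y => Xop (b i) (Xop (b j) u) y - Xop (b j) (Xop (b i) u) y) x
        = Xop (b i) (Xop E u) x :=
      Xop_congr (Filter.eventuallyEq_of_mem hΩx fun y hy => hbrA y hy)
    have hbrB := Xop_bracket (c := b i) (d := b j) (u := Xop (b i) u) hbid hbjd
      ((hX1 i x hx).of_le (by norm_num))
    have heqE : Xop (vfBracket (b i) (b j)) (Xop (b i) u) x = Xop E (Xop (b i) u) x := rfl
    have hbrC := Xop_bracket (c := b i) (d := E) (u := u) hbid hEd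
      ((huAt x hx).of_le (by norm_num))
    have hzero : Xop (vfBracket (b i) E) u x = 0 := by
      have h0 : vfBracket (b i) E x = 0 := hcomm i j x hx
      unfold Xop
      rw [h0, map_zero]
    rw [hsub] at hsplit
    rw [heqE] at hbrB
    linarith [hsplit, hbrB, hzero, hbrC]
  calc ∑ i : Fin m, Xop (b i)
        (fun y => (if i = j then subLap b u y else 0) +
          Xop (b i) (Xop (b j) u) y - 2 * Xop (b j) (Xop (b i) u) y) x
      = ∑ i : Fin m, ((if i = j then Xop (b j) (subLap b u) x else 0)
          + Xop (b i) (Xop (b i) (Xop (b j) u)) x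
          - 2 * Xop (b i) (Xop (b j) (Xop (b i) u)) x) := by
        refine Finset.sum_congr rfl fun i _ => ?_
        have hdA : DifferentiableAt ℝ (Xop (b i) (Xop (b j) u)) x :=
          (hX2 i j x hx).differentiableAt (by norm_num)
        have hdB : DifferentiableAt ℝ (Xop (b j) (Xop (b i) u)) x :=
          (hX2 j i x hx).differentiableAt (by norm_num)
        by_cases h : i = j
        · subst h
          simp only [if_pos rfl]
          exact Xop_comb hdSub hdA hdB
        · simp only [if_neg h, zero_add]
          exact Xop_sub_two hdA hdB
    _ = 0 := by
        rw [Finset.sum_sub_distrib, Finset.sum_add_distrib,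
          Finset.sum_ite_eq' Finset.univ j
            (fun _ => Xop (b j) (subLap b u) x)]
        simp only [Finset.mem_univ, if_pos]
        rw [hXsum, ← Finset.sum_add_distrib, ← Finset.sum_sub_distrib]
        exact Finset.sum_eq_zero fun i _ => key i
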